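/- Let G be a simple graph on a finite vertex set and let S be a set of vertices of G. Then det(G[S]) = 1 over GF(2) if and only if there exists a sequence of pivots φ applicable to G with sup(φ) = S (and in that case φ can moreover be chosen reduced, i.e. with pairwise distinct pivot vertices). -/

import Mathlib

set_option linter.unusedSectionVars false

variable {V : Type*} [Fintype V] [DecidableEq V]

/-- Local complementation at a vertex `w`: complement the edges within `N_G(w)`. -/
def SimpleGraph.localComp (G : SimpleGraph V) (w : V) : SimpleGraph V where
  Adj x y := x ≠ y ∧ Xor' (G.Adj x y) (G.Adj x w ∧ G.Adj y w)
  symm := by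
    constructor
    intro x y ⟨hne, hx⟩
    refine ⟨hne.symm, ?_⟩
    have h1 := G.adj_comm x y
    unfold Xor' Xor at hx ⊢
    tauto
  loopless := by constructor; intro x ⟨h, _⟩; exact h rfl

/-- `x ∼_G y` : `x = y` or `{x,y}` is an edge of `G`. -/
def SimpleGraph.nbr (G : SimpleGraph V) (x y : V) : Prop := x = y ∨ G.Adj x y

theorem SimpleGraph.nbr_comm (G : SimpleGraph V) (x y : V) : G.nbr x y ↔ G.nbr y x :=
  or_congr eq_comm (G.adj_comm x y)

private theorem xor_swap_right (a b c : Prop) : Xor' (Xor' a b) c ↔ Xor' (Xor' a c) b := by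
  unfold Xor' Xor; tauto

/-- The pivot `G[uv]` of `G` on an edge `{u,v}`, characterized by
`x ∼_{G[uv]} y ⟺ (x ∼_G y) XOR ((x ∼_G u) ∧ (y ∼_G v)) XOR ((x ∼_G v) ∧ (y ∼_G u))`. -/
def SimpleGraph.pivot (G : SimpleGraph V) (u v : V) : SimpleGraph V where
  Adj x y := x ≠ y ∧
    Xor' (Xor' (G.nbr x y) (G.nbr x u ∧ G.nbr y v)) (G.nbr x v ∧ G.nbr y u)
  symm := by
    constructor
    intro x y ⟨hne, hx⟩
    refine ⟨hne.symm, ?_⟩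
    show Xor' (Xor' (G.nbr y x) (G.nbr y u ∧ G.nbr x v)) (G.nbr y v ∧ G.nbr x u)
    rw [G.nbr_comm y x, and_comm (a := G.nbr y u) (b := G.nbr x v),
      and_comm (a := G.nbr y v) (b := G.nbr x u)]
    exact (xor_swap_right _ _ _).mp hx
  loopless := by constructor; intro x ⟨h, _⟩; exact h rfl

/-- Determinant over GF(2) of the adjacency matrix of the subgraph of `G` induced by `S`. -/
noncomputable def gdet (G : SimpleGraph V) (S : Finset V) : ZMod 2 := by
  classical
  exact Matrix.det (Matrix.of fun i j : S => if G.Adj i j then (1 : ZMod 2) else 0)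

/-- Apply a sequence of pivots (left to right). -/
def applyPivots (G : SimpleGraph V) : List (V × V) → SimpleGraph V
  | [] => G
  | p :: φ => applyPivots (G.pivot p.1 p.2) φ

/-- A sequence of pivots is applicable when each pair is an edge of the graph
obtained by applying all preceding pivots. -/
def PivotsApplicable (G : SimpleGraph V) : List (V × V) → Prop
  | [] => True
  | p :: φ => G.Adj p.1 p.2 ∧ PivotsApplicable (G.pivot p.1 p.2) φ

/-- The support of a sequence of pivots: vertices occurring an odd number of times. -/
def pivotSupport (φ : List (V × V)) : Finset V :=
  Finset.univ.filter fun x => Odd ((φ.flatMap fun p => [p.1, p.2]).count x)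

/-- A sequence of pivots is reduced if its pivot vertices are pairwise distinct. -/
def ReducedSeq (φ : List (V × V)) : Prop := (φ.flatMap fun p => [p.1, p.2]).Nodup

/-- The number of perfect matchings of the subgraph of `G` induced by `S`:
sets of edges of `G` inside `S` such that every vertex of `S` lies in exactly one of them. -/
noncomputable def pmCount (G : SimpleGraph V) (S : Finset V) : ℕ := by
  classical
  exact (Finset.univ.filter fun P : Finset (Sym2 V) =>
    (∀ e ∈ P, e ∈ G.edgeSet ∧ ∀ v ∈ e, v ∈ S) ∧
    ∀ v ∈ S, ∃! e, e ∈ P ∧ v ∈ e).card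

section PivotAux

open Matrix Finset

open scoped Classical in
/-- Adjacency matrix of `G` over GF(2). -/
noncomputable def adjMat (G : SimpleGraph V) : Matrix V V (ZMod 2) :=
  Matrix.of fun i j => if G.Adj i j then 1 else 0

lemma adjMat_apply (G : SimpleGraph V) [DecidableRel G.Adj] (i j : V) :
    adjMat G i j = if G.Adj i j then 1 else 0 := by
  unfold adjMat; simp only [Matrix.of_apply]; congr 1

lemma adjMat_symm (G : SimpleGraph V) (i j : V) : adjMat G i j = adjMat G j i := by
  classical
  rw [adjMat_apply, adjMat_apply, G.adj_comm]

lemma gdet_eq (G : SimpleGraph V) (S : Finset V) :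
    gdet G S = Matrix.det (Matrix.of fun i j : S => adjMat G i.val j.val) := by
  unfold gdet adjMat
  rfl

/-- The kernel characterization of `gdet = 1`. -/
lemma gdet_eq_one_iff_ker (G : SimpleGraph V) (X : Finset V) :
    gdet G X = 1 ↔ ∀ x : V → ZMod 2, (∀ w, w ∉ X → x w = 0) →
      (∀ w ∈ X, (adjMat G).mulVec x w = 0) → x = 0 := by
  classical
  rw [gdet_eq]
  set M : Matrix X X (ZMod 2) := Matrix.of fun i j : X => adjMat G i.val j.val with hM
  have hdet1 : M.det = 1 ↔ M.det ≠ 0 := by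
    constructor
    · intro h; rw [h]; exact one_ne_zero
    · intro h
      have := M.det
      revert h
      generalize M.det = d
      revert d; decide
  rw [hdet1, Ne, ← Matrix.exists_mulVec_eq_zero_iff, not_exists]
  constructor
  · intro h x hsupp hker
    funext w
    by_cases hw : w ∈ X
    · have h2 := h (fun j : X => x j.val)
      have hy : M.mulVec (fun j : X => x j.val) = 0 := by
        funext i
        have : M.mulVec (fun j : X => x j.val) i = (adjMat G).mulVec x i.val := by
          simp only [Matrix.mulVec, dotProduct, hM, Matrix.of_apply]
          rw [Finset.sum_coe_sort X (fun j => adjMat G i.val j * x j)]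
          refine Finset.sum_subset X.subset_univ ?_
          intro j _ hj
          rw [hsupp j hj, mul_zero]
        rw [this, hker i.val i.2]; rfl
      by_contra hx
      have : (fun j : X => x j.val) ≠ 0 := by
        intro h0
        apply hx
        have := congrFun h0 ⟨w, hw⟩
        exact this
      exact h2 ⟨this, hy⟩
    · exact hsupp w hw
  · intro h y ⟨hy0, hyker⟩
    set x : V → ZMod 2 := fun w => if h : w ∈ X then y ⟨w, h⟩ else 0 with hx
    have hxsupp : ∀ w, w ∉ X → x w = 0 := by intro w hw; simp [hx, hw]
    have hxker : ∀ w ∈ X, (adjMat G).mulVec x w = 0 := by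
      intro w hw
      have : (adjMat G).mulVec x w = M.mulVec y ⟨w, hw⟩ := by
        simp only [Matrix.mulVec, dotProduct, hM, Matrix.of_apply]
        rw [← Finset.sum_subset X.subset_univ (fun j _ hj => by rw [hxsupp j hj, mul_zero]),
          ← Finset.sum_coe_sort X (fun j => adjMat G w j * x j)]
        refine Finset.sum_congr rfl fun j _ => ?_
        simp [hx, j.2]
      rw [this, hyker]; rfl
    have := h x hxsupp hxker
    apply hy0
    funext j
    have := congrFun this j.val
    simpa [hx, j.2] using this

end PivotAux
section PivotAux2

open Matrix Finset

open scoped Classical in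
/-- Indicator vector of the closed neighborhood of `w`. -/
noncomputable def nbrVec (G : SimpleGraph V) (w : V) : V → ZMod 2 :=
  fun x => if G.nbr x w then 1 else 0

lemma nbrVec_eq (G : SimpleGraph V) (w x : V) :
    nbrVec G w x = adjMat G x w + (if x = w then 1 else 0) := by
  classical
  unfold nbrVec SimpleGraph.nbr
  rw [adjMat_apply]
  by_cases h1 : x = w
  · subst h1
    simp [G.irrefl]
  · by_cases h2 : G.Adj x w <;> simp [h1, h2]

lemma ite_xor (a b : Prop) [Decidable a] [Decidable b] [Decidable (Xor' a b)] :
    (if Xor' a b then (1 : ZMod 2) else 0) = (if a then 1 else 0) + (if b then 1 else 0) := by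
  by_cases ha : a <;> by_cases hb : b <;> simp [Xor', Xor, ha, hb] <;> decide

lemma iteAnd (a b : Prop) [Decidable a] [Decidable b] :
    (if a ∧ b then (1 : ZMod 2) else 0) = (if a then 1 else 0) * (if b then 1 else 0) := by
  by_cases ha : a <;> by_cases hb : b <;> simp [ha, hb]

/-- The adjacency matrix of a pivot is a rank-two update over GF(2). -/
lemma adjMat_pivot (G : SimpleGraph V) (u v : V) :
    adjMat (G.pivot u v) = adjMat G
      + Matrix.vecMulVec (nbrVec G u) (nbrVec G v)
      + Matrix.vecMulVec (nbrVec G v) (nbrVec G u) := by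
  classical
  ext x y
  simp only [Matrix.add_apply, Matrix.vecMulVec_apply]
  rw [adjMat_apply, adjMat_apply]
  by_cases hxy : x = y
  · subst hxy
    rw [if_neg ((G.pivot u v).irrefl), if_neg (G.irrefl)]
    rw [mul_comm (nbrVec G v x)]
    rw [zero_add, CharTwo.add_self_eq_zero]
  · have hadj : (G.pivot u v).Adj x y ↔
        Xor' (Xor' (G.nbr x y) (G.nbr x u ∧ G.nbr y v)) (G.nbr x v ∧ G.nbr y u) :=
      ⟨fun h => h.2, fun h => ⟨hxy, h⟩⟩
    have hnxy : (if G.nbr x y then (1:ZMod 2) else 0) = if G.Adj x y then 1 else 0 := by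
      unfold SimpleGraph.nbr
      simp [hxy]
    rw [if_congr hadj rfl rfl, ite_xor, ite_xor, iteAnd, iteAnd, hnxy]
    rfl

end PivotAux2
section PivotAux3

open Matrix Finset

/-- The PPT transfer map: swap `x` and `Ax` coordinates at `u` and `v`. -/
noncomputable def pptMap (G : SimpleGraph V) (u v : V) (x : V → ZMod 2) : V → ZMod 2 :=
  fun w => if w = u ∨ w = v then (adjMat G).mulVec x w else x w

lemma pptMap_eq (G : SimpleGraph V) (u v : V) (huv : u ≠ v) (x : V → ZMod 2) :
    pptMap G u v x = x + ((x u + (adjMat G).mulVec x u) • (Pi.single u 1 : V → ZMod 2))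
      + ((x v + (adjMat G).mulVec x v) • (Pi.single v 1 : V → ZMod 2)) := by
  funext w
  simp only [pptMap, Pi.add_apply, Pi.smul_apply, Pi.single_apply, smul_eq_mul]
  by_cases hu : w = u
  · subst hu
    rw [if_pos (Or.inl rfl), if_pos rfl, if_neg huv]
    rw [mul_one, mul_zero, add_zero, ← add_assoc, CharTwo.add_self_eq_zero, zero_add]
  · by_cases hv : w = v
    · subst hv
      rw [if_pos (Or.inr rfl), if_neg hu, if_pos rfl]
      rw [mul_one, mul_zero, add_zero, ← add_assoc, CharTwo.add_self_eq_zero, zero_add]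
    · rw [if_neg (by tauto), if_neg hu, if_neg hv, mul_zero, mul_zero, add_zero, add_zero]

lemma vecMulVec_mulVec' (a b z : V → ZMod 2) :
    (Matrix.vecMulVec a b) *ᵥ z = (b ⬝ᵥ z) • a := by
  funext i
  simp only [Matrix.mulVec, dotProduct, Matrix.vecMulVec_apply, Pi.smul_apply,
    smul_eq_mul]
  rw [Finset.sum_congr rfl (fun j _ => mul_assoc (a i) (b j) (z j)), ← Finset.mul_sum,
    mul_comm]

/-- Core PPT identity. -/
lemma ppt_mulVec (G : SimpleGraph V) (u v : V) (h : G.Adj u v) (x : V → ZMod 2) :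
    (adjMat (G.pivot u v)).mulVec (pptMap G u v x)
      = fun w => if w = u ∨ w = v then x w else (adjMat G).mulVec x w := by
  classical
  set A := adjMat G with hA
  set y := A.mulVec x with hy
  set δ := x u + y u with hδ
  set ε := x v + y v with hε
  set z := pptMap G u v x with hz
  have hAuu : A u u = 0 := by rw [hA, adjMat_apply, if_neg (G.irrefl)]
  have hAvv : A v v = 0 := by rw [hA, adjMat_apply, if_neg (G.irrefl)]
  have hAuv : A u v = 1 := by rw [hA, adjMat_apply, if_pos h]
  have hAvu : A v u = 1 := by rw [hA, adjMat_apply, if_pos h.symm]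
  have hAz : A *ᵥ z = fun w => y w + δ * A w u + ε * A w v := by
    rw [show z = pptMap G u v x from hz, pptMap_eq G u v h.ne x, mulVec_add, mulVec_add,
      mulVec_smul, mulVec_smul, mulVec_single, mulVec_single]
    funext w
    simp only [Pi.add_apply, Pi.smul_apply, smul_eq_mul, mul_one, ← hA, ← hy, ← hδ, ← hε,
      MulOpposite.op_one, one_smul, Matrix.col_apply]
  have hzu : z u = y u := by rw [show z = pptMap G u v x from hz]; simp [pptMap, ← hy, ← hA]
  have hzv : z v = y v := by rw [show z = pptMap G u v x from hz]; simp [pptMap, ← hy, ← hA]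
  have hdot : ∀ t : V, nbrVec G t ⬝ᵥ z = (A *ᵥ z) t + z t := by
    intro t
    simp only [dotProduct, nbrVec_eq, ← hA, add_mul, Finset.sum_add_distrib]
    congr 1
    · simp only [Matrix.mulVec, dotProduct]
      refine Finset.sum_congr rfl fun w _ => ?_
      rw [hA, adjMat_symm]
    · simp [ite_mul, Finset.sum_ite_eq, Finset.sum_ite_eq']
  have hcu : nbrVec G u ⬝ᵥ z = ε := by
    rw [hdot u, hAz, hzu]
    simp only [hAuu, hAuv, mul_zero, mul_one, add_zero]
    rw [add_comm (y u) ε, add_assoc, CharTwo.add_self_eq_zero, add_zero]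
  have hcv : nbrVec G v ⬝ᵥ z = δ := by
    rw [hdot v, hAz, hzv]
    simp only [hAvv, hAvu, mul_zero, mul_one, add_zero]
    rw [add_comm (y v) δ, add_assoc, CharTwo.add_self_eq_zero, add_zero]
  rw [show adjMat (G.pivot u v) = _ from adjMat_pivot G u v, add_mulVec, add_mulVec,
    vecMulVec_mulVec', vecMulVec_mulVec', hcu, hcv, hAz]
  funext w
  simp only [Pi.add_apply, Pi.smul_apply, smul_eq_mul]
  rw [nbrVec_eq, nbrVec_eq, ← hA]
  by_cases hu : w = u
  · rw [hu, hAuu, hAuv]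
    simp only [eq_self_iff_true, if_true, true_or, if_pos, h.ne, if_false, ite_true,
      ite_false, if_neg h.ne]
    rw [hδ, hε]
    generalize y u = q
    generalize y v = s
    generalize x u = p
    generalize x v = r
    revert p q r s; decide
  · by_cases hv : w = v
    · rw [hv, hAvu, hAvv]
      simp only [eq_self_iff_true, if_true, or_true, if_pos, if_neg (Ne.symm h.ne),
        ite_true, ite_false]
      rw [hδ, hε]
      generalize y u = q
      generalize y v = s
      generalize x u = p
      generalize x v = r
      revert p q r s; decide
    · rw [if_neg hu, if_neg hv, if_neg (show ¬(w = u ∨ w = v) by tauto)]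
      rw [hδ, hε]
      generalize y w = t
      generalize y u = q
      generalize y v = s
      generalize x u = p
      generalize x v = r
      generalize A w u = c
      generalize A w v = d
      revert p q r s t c d; decide

end PivotAux3
section PivotAux4

open Matrix Finset

lemma pptMap_zero (G : SimpleGraph V) (u v : V) : pptMap G u v 0 = 0 := by
  funext w
  simp [pptMap, Matrix.mulVec_zero]

lemma pptMap_injective (G : SimpleGraph V) (u v : V) (h : G.Adj u v) :
    Function.Injective (pptMap G u v) := by
  intro x1 x2 he
  classical
  set A := adjMat G with hA
  set d := x1 - x2 with hd
  have hAuu : A u u = 0 := by rw [hA, adjMat_apply, if_neg (G.irrefl)]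
  have hAvv : A v v = 0 := by rw [hA, adjMat_apply, if_neg (G.irrefl)]
  have hAuv : A u v = 1 := by rw [hA, adjMat_apply, if_pos h]
  have hAvu : A v u = 1 := by rw [hA, adjMat_apply, if_pos h.symm]
  have hco : ∀ w, ¬(w = u ∨ w = v) → d w = 0 := by
    intro w hw
    have := congrFun he w
    simp only [pptMap, if_neg hw] at this
    simp [hd, this]
  have hrep : d = d u • (Pi.single u 1 : V → ZMod 2) + d v • (Pi.single v 1 : V → ZMod 2) := by
    funext w
    simp only [Pi.add_apply, Pi.smul_apply, Pi.single_apply, smul_eq_mul]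
    by_cases hu : w = u
    · rw [hu, if_pos rfl, if_neg h.ne, mul_one, mul_zero, add_zero]
    · by_cases hv : w = v
      · rw [hv, if_neg (Ne.symm h.ne), if_pos rfl, mul_zero, mul_one, zero_add]
      · rw [if_neg hu, if_neg hv, mul_zero, mul_zero, add_zero, hco w (by tauto)]
  have hAdrep : A *ᵥ d = d u • (fun i => A i u * 1) + d v • (fun i => A i v * 1) := by
    rw [show A *ᵥ d = A *ᵥ (d u • (Pi.single u 1 : V → ZMod 2)
        + d v • (Pi.single v 1 : V → ZMod 2)) from by rw [← hrep]]
    rw [Matrix.mulVec_add, Matrix.mulVec_smul, Matrix.mulVec_smul, Matrix.mulVec_single,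
      Matrix.mulVec_single]
    funext i
    simp [Matrix.col_apply]
  have hAdu : (A *ᵥ d) u = 0 := by
    have := congrFun he u
    simp only [pptMap, eq_self_iff_true, true_or, or_true, if_true, ← hA] at this
    rw [hd, Matrix.mulVec_sub]
    simp only [Pi.sub_apply, this, sub_self]
  have hAdv : (A *ᵥ d) v = 0 := by
    have := congrFun he v
    simp only [pptMap, eq_self_iff_true, true_or, or_true, if_true, ← hA] at this
    rw [hd, Matrix.mulVec_sub]
    simp only [Pi.sub_apply, this, sub_self]
  have hdv : d v = 0 := by
    have := congrFun hAdrep u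
    rw [hAdu] at this
    simp only [Pi.add_apply, Pi.smul_apply, smul_eq_mul, mul_one, hAuu, hAuv, mul_zero,
      mul_one, zero_add] at this
    exact this.symm
  have hdu : d u = 0 := by
    have := congrFun hAdrep v
    rw [hAdv] at this
    simp only [Pi.add_apply, Pi.smul_apply, smul_eq_mul, mul_one, hAvu, hAvv, mul_zero,
      mul_one, add_zero] at this
    exact this.symm
  have : d = 0 := by rw [hrep, hdu, hdv, zero_smul, zero_smul, add_zero]
  have := sub_eq_zero.mp (hd ▸ this)
  exact this

lemma pptMap_surjective (G : SimpleGraph V) (u v : V) (h : G.Adj u v) :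
    Function.Surjective (pptMap G u v) :=
  Finite.injective_iff_surjective.mp (pptMap_injective G u v h)

lemma mem_pair_finset (u v w : V) : w ∈ ({u, v} : Finset V) ↔ w = u ∨ w = v := by
  simp [Finset.mem_insert, Finset.mem_singleton]

/-- KEY LEMMA: pivoting on an edge changes principal nonsingularity by `∆ {u,v}`. -/
lemma gdet_pivot_iff (G : SimpleGraph V) {u v : V} (h : G.Adj u v) (X : Finset V) :
    gdet (G.pivot u v) X = 1 ↔ gdet G (symmDiff X {u, v}) = 1 := by
  classical
  rw [gdet_eq_one_iff_ker, gdet_eq_one_iff_ker]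
  have memSD : ∀ w, w ∈ symmDiff X ({u, v} : Finset V) ↔
      ((w ∈ X ∧ ¬(w = u ∨ w = v)) ∨ ((w = u ∨ w = v) ∧ w ∉ X)) := by
    intro w
    rw [Finset.mem_symmDiff]
    constructor
    · rintro (⟨h1, h2⟩ | ⟨h1, h2⟩)
      · exact Or.inl ⟨h1, fun hc => h2 ((mem_pair_finset u v w).mpr hc)⟩
      · exact Or.inr ⟨(mem_pair_finset u v w).mp h1, h2⟩
    · rintro (⟨h1, h2⟩ | ⟨h1, h2⟩)
      · exact Or.inl ⟨h1, fun hc => h2 ((mem_pair_finset u v w).mp hc)⟩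
      · exact Or.inr ⟨(mem_pair_finset u v w).mpr h1, h2⟩
  constructor
  · intro hK x hsupp hker
    have hz := ppt_mulVec G u v h x
    have h1 : ∀ w, w ∉ X → pptMap G u v x w = 0 := by
      intro w hw
      simp only [pptMap]
      by_cases hp : w = u ∨ w = v
      · rw [if_pos hp]
        exact hker w ((memSD w).mpr (Or.inr ⟨hp, hw⟩))
      · rw [if_neg hp]
        exact hsupp w (fun hc => by
          rcases (memSD w).mp hc with ⟨_, h2⟩ | ⟨h2, _⟩
          · exact hw ‹w ∈ X›
          · exact hp h2)
    have h2 : ∀ w ∈ X, (adjMat (G.pivot u v)).mulVec (pptMap G u v x) w = 0 := by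
      intro w hw
      rw [hz]
      by_cases hp : w = u ∨ w = v
      · simp only [if_pos hp]
        refine hsupp w (fun hc => ?_)
        rcases (memSD w).mp hc with ⟨_, h3⟩ | ⟨_, h3⟩
        · exact h3 hp
        · exact h3 hw
      · simp only [if_neg hp]
        exact hker w ((memSD w).mpr (Or.inl ⟨hw, hp⟩))
    have hz0 := hK _ h1 h2
    have : pptMap G u v x = pptMap G u v 0 := by rw [hz0, pptMap_zero]
    exact pptMap_injective G u v h this
  · intro hK z hsupp hker
    obtain ⟨x, rfl⟩ := pptMap_surjective G u v h z
    have hz := ppt_mulVec G u v h x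
    have h1 : ∀ w, w ∉ symmDiff X ({u, v} : Finset V) → x w = 0 := by
      intro w hw
      by_cases hp : w = u ∨ w = v
      · -- then w ∈ X (else w ∈ symmDiff); use (B z) w = x w = 0
        by_cases hX : w ∈ X
        · have := hker w hX
          rw [hz] at this
          simp only [if_pos hp] at this
          exact this
        · exact absurd ((memSD w).mpr (Or.inr ⟨hp, hX⟩)) hw
      · -- x w = z w; need w ∉ X
        by_cases hX : w ∈ X
        · exact absurd ((memSD w).mpr (Or.inl ⟨hX, hp⟩)) hw
        · have := hsupp w hX
          simp only [pptMap, if_neg hp] at this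
          exact this
    have h2 : ∀ w ∈ symmDiff X ({u, v} : Finset V), (adjMat G).mulVec x w = 0 := by
      intro w hw
      rcases (memSD w).mp hw with ⟨hX, hp⟩ | ⟨hp, hX⟩
      · have := hker w hX
        rw [hz] at this
        simp only [if_neg hp] at this
        exact this
      · have := hsupp w hX
        simp only [pptMap, if_pos hp] at this
        exact this
    rw [hK x h1 h2, pptMap_zero]

end PivotAux4
section PivotAux5

open Matrix Finset

lemma pivotSupport_nil : pivotSupport ([] : List (V × V)) = ∅ := by
  ext w
  simp [pivotSupport]

lemma pivotSupport_cons (u v : V) (ψ : List (V × V)) (huv : u ≠ v) :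
    pivotSupport ((u, v) :: ψ) = symmDiff (pivotSupport ψ) {u, v} := by
  ext w
  by_cases h1 : w = u
  · simp [pivotSupport, Finset.mem_symmDiff, mem_pair_finset, List.flatMap_cons,
      List.count_cons, h1, huv, Ne.symm huv, Nat.odd_iff]
    omega
  · by_cases h2 : w = v
    · simp [pivotSupport, Finset.mem_symmDiff, mem_pair_finset, List.flatMap_cons,
        List.count_cons, h2, huv, Ne.symm huv, Nat.odd_iff]
      omega
    · simp [pivotSupport, Finset.mem_symmDiff, mem_pair_finset, List.flatMap_cons,
        List.count_cons, h1, h2, Ne.symm h1, Ne.symm h2, Nat.odd_iff]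

lemma gdet_empty (G : SimpleGraph V) : gdet G (∅ : Finset V) = 1 := by
  haveI : IsEmpty ((∅ : Finset V) : Type _) := ⟨fun x => absurd x.2 (Finset.notMem_empty _)⟩
  rw [gdet_eq]
  exact Matrix.det_isEmpty

lemma exists_adj_of_gdet (G : SimpleGraph V) (S : Finset V) (hdet : gdet G S = 1)
    {u : V} (hu : u ∈ S) : ∃ v ∈ S, G.Adj u v := by
  classical
  by_contra hno
  push_neg at hno
  have hK := (gdet_eq_one_iff_ker G S).mp hdet
  have h0 := hK (Pi.single u 1) ?_ ?_
  · have := congrFun h0 u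
    simp at this
  · intro w hw
    rw [Pi.single_apply, if_neg (fun h : w = u => hw (h ▸ hu))]
  · intro w hw
    rw [Matrix.mulVec_single]
    show adjMat G w u * 1 = 0
    have : adjMat G w u = 0 := by
      rw [adjMat_apply, if_neg]
      intro hadj
      exact absurd hadj.symm (hno w hw)
    rw [this, zero_mul]

lemma reduced_mem_support {ψ : List (V × V)} (hred : ReducedSeq ψ) (w : V) :
    w ∈ pivotSupport ψ ↔ w ∈ ψ.flatMap fun p => [p.1, p.2] := by
  simp only [pivotSupport, Finset.mem_filter, Finset.mem_univ, true_and]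
  unfold ReducedSeq at hred
  constructor
  · intro hodd
    rcases hodd with ⟨k, hk⟩
    have : 0 < (ψ.flatMap fun p => [p.1, p.2]).count w := by omega
    exact List.count_pos_iff.mp this
  · intro hmem
    have h1 : (ψ.flatMap fun p => [p.1, p.2]).count w = 1 :=
      List.count_eq_one_of_mem hred hmem
    rw [h1]
    exact odd_one

/-- Backward direction, as an induction over the sequence. -/
lemma gdet_of_applicable (φ : List (V × V)) :
    ∀ G : SimpleGraph V, PivotsApplicable G φ → gdet G (pivotSupport φ) = 1 := by
  induction φ with
  | nil =>
    intro G _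
    rw [pivotSupport_nil]
    exact gdet_empty G
  | cons p ψ ih =>
    intro G happ
    rcases p with ⟨a, b⟩
    obtain ⟨hadj, happ'⟩ := happ
    have h1 := ih (G.pivot a b) happ'
    have h2 := (gdet_pivot_iff G hadj (pivotSupport ψ)).mp h1
    rw [pivotSupport_cons a b ψ hadj.ne]
    exact h2

/-- Forward direction, by strong induction on the size of `S`. -/
lemma exists_seq_of_gdet (n : ℕ) :
    ∀ (G : SimpleGraph V) (S : Finset V), S.card ≤ n → gdet G S = 1 →
      ∃ φ : List (V × V), PivotsApplicable G φ ∧ pivotSupport φ = S ∧ ReducedSeq φ := by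
  induction n with
  | zero =>
    intro G S hcard _
    have : S = ∅ := Finset.card_eq_zero.mp (Nat.le_zero.mp hcard)
    subst this
    exact ⟨[], trivial, pivotSupport_nil, List.nodup_nil⟩
  | succ n ih =>
    intro G S hcard hdet
    by_cases hS : S = ∅
    · subst hS
      exact ⟨[], trivial, pivotSupport_nil, List.nodup_nil⟩
    · obtain ⟨u, hu⟩ := Finset.nonempty_iff_ne_empty.mpr hS
      obtain ⟨v, hv, huv⟩ := exists_adj_of_gdet G S hdet hu
      have hne : u ≠ v := huv.ne
      have hSD : symmDiff (S \ {u, v}) ({u, v} : Finset V) = S := by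
        ext w
        simp only [Finset.mem_symmDiff, Finset.mem_sdiff, mem_pair_finset]
        constructor
        · rintro (⟨⟨h1, _⟩, _⟩ | ⟨h1, h2⟩)
          · exact h1
          · rcases h1 with rfl | rfl
            · exact hu
            · exact hv
        · intro hw
          by_cases hp : w = u ∨ w = v
          · right
            exact ⟨hp, fun hc => hc.2 hp⟩
          · left
            exact ⟨⟨hw, hp⟩, fun hc => hp hc⟩
      have hdet' : gdet (G.pivot u v) (S \ {u, v}) = 1 := by
        rw [gdet_pivot_iff G huv, hSD]
        exact hdet
      have hsub : S \ {u, v} ⊆ S.erase u := by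
        intro w hw
        rw [Finset.mem_sdiff, mem_pair_finset] at hw
        exact Finset.mem_erase.mpr ⟨fun hc => hw.2 (Or.inl hc), hw.1⟩
      have hcard' : (S \ {u, v}).card ≤ n := by
        have h1 := Finset.card_le_card hsub
        have h2 := Finset.card_erase_of_mem hu
        omega
      obtain ⟨ψ, happ, hsupψ, hredψ⟩ := ih (G.pivot u v) (S \ {u, v}) hcard' hdet'
      refine ⟨(u, v) :: ψ, ⟨huv, happ⟩, ?_, ?_⟩
      · rw [pivotSupport_cons u v ψ hne, hsupψ, hSD]
      · unfold ReducedSeq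
        rw [List.flatMap_cons]
        have hmem : ∀ w, w ∈ ψ.flatMap (fun p => [p.1, p.2]) → w ∈ S \ {u, v} := by
          intro w hw
          rw [← hsupψ]
          exact (reduced_mem_support hredψ w).mpr hw
        have hun : u ∉ ψ.flatMap fun p => [p.1, p.2] := by
          intro hc
          have := hmem u hc
          rw [Finset.mem_sdiff, mem_pair_finset] at this
          exact this.2 (Or.inl rfl)
        have hvn : v ∉ ψ.flatMap fun p => [p.1, p.2] := by
          intro hc
          have := hmem v hc
          rw [Finset.mem_sdiff, mem_pair_finset] at this
          exact this.2 (Or.inr rfl)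
        simp only [List.cons_append, List.nil_append, List.nodup_cons, List.mem_cons]
        exact ⟨fun hc => hc.elim hne hun, hvn, hredψ⟩

end PivotAux5
/-- `det(G[S]) = 1` iff there is an applicable (and then even a reduced)
sequence of pivots with support `S`. -/
theorem gdet_eq_one_iff_exists_sequence (G : SimpleGraph V) (S : Finset V) :
    gdet G S = 1 ↔
      ∃ φ : List (V × V), PivotsApplicable G φ ∧ pivotSupport φ = S ∧ ReducedSeq φ := by
  constructor
  · intro h
    exact exists_seq_of_gdet S.card G S le_rfl h
  · rintro ⟨φ, happ, rfl, -⟩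
    exact gdet_of_applicable φ G happ
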